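/- Fix 1 ≤ k ≤ n−1, let ρ = ⊖(n−k, k) be the skew sum of id_{n−k} and id_k (i.e., ρ = (k+1)(k+2)…n 1 2 … k). Then for every permutation π of size n and every m ≥ 0, shadow_k(T^m(π)) ≼ shadow_k(T^m(ρ)) in the poset X(k, n−k). -/

import Mathlib

/-- Split a list into maximal strictly decreasing contiguous blocks ("falls"). -/
def fallSplit : List ℕ → List (List ℕ)
  | [] => []
  | a :: rest =>
    match fallSplit rest with
    | (b :: bs) :: gs => if b < a then (a :: b :: bs) :: gs else [a] :: (b :: bs) :: gs
    | gs => [a] :: gs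

/-- Split a list into maximal strictly increasing contiguous blocks ("runs"). -/
def runSplit : List ℕ → List (List ℕ)
  | [] => []
  | a :: rest =>
    match runSplit rest with
    | (b :: bs) :: gs => if a < b then (a :: b :: bs) :: gs else [a] :: (b :: bs) :: gs
    | gs => [a] :: gs

/-- The flip transformation `T`: reverse every fall. -/
def flipT (l : List ℕ) : List ℕ := ((fallSplit l).map List.reverse).flatten

/-- `l` is the one-line notation of a permutation of `{1, …, n}`. -/
def IsPermList (n : ℕ) (l : List ℕ) : Prop := l.Perm (List.range' 1 n)

/-- Every pair of adjacent runs overlaps: `min R₁ < max R₂` (pop-stacked condition). -/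
def Overlapping (l : List ℕ) : Prop :=
  ∀ R₁ R₂ : List ℕ, [R₁, R₂] <:+: runSplit l → ∃ a ∈ R₁, ∃ b ∈ R₂, a < b

/-- The k-shadow of a permutation: replace each value ≤ k by S (= true) and each value
> k by L (= false). -/
def shadow (k : ℕ) (l : List ℕ) : List Bool := l.map fun v => decide (v ≤ k)

/-- Replace every factor LS by SL (one step of T on shadows). -/
def stepLS : List Bool → List Bool
  | false :: true :: rest => true :: false :: stepLS rest
  | a :: rest => a :: stepLS rest
  | [] => []

/-- The partial order λ ≼ μ on {S,L}-words: each j-th S (from the left) of λ lies weakly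
to the left of the j-th S of μ; equivalently every prefix of λ contains at least as many
S letters as the corresponding prefix of μ. -/
def SPrec (lam mu : List Bool) : Prop :=
  ∀ p : ℕ, (mu.take p).count true ≤ (lam.take p).count true

@[simp] lemma stepLS_nil : stepLS [] = [] := rfl

lemma stepLS_eq_cons (a : Bool) (rest : List Bool)
    (h : ∀ r, a = false → rest = true :: r → False) :
    stepLS (a :: rest) = a :: stepLS rest := by
  match a, rest with
  | true, rest => rfl
  | false, [] => rfl
  | false, true :: r => exact absurd rfl (h r rfl)
  | false, false :: r => rfl

def cnt (p : ℕ) (w : List Bool) : ℕ := (w.take p).count true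

@[simp] lemma cnt_zero (w : List Bool) : cnt 0 w = 0 := rfl

@[simp] lemma cnt_nil (p : ℕ) : cnt p [] = 0 := by simp [cnt]

@[simp] lemma cnt_succ_true (p : ℕ) (w : List Bool) : cnt (p+1) (true::w) = cnt p w + 1 := by
  simp [cnt, List.count_cons]

@[simp] lemma cnt_succ_false (p : ℕ) (w : List Bool) : cnt (p+1) (false::w) = cnt p w := by
  simp [cnt, List.count_cons]

lemma stepLS_length (w : List Bool) : (stepLS w).length = w.length := by
  induction w using stepLS.induct with
  | case1 rest ih => simp [stepLS, ih]
  | case2 a rest h ih => rw [stepLS_eq_cons a rest h]; simp [ih]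
  | case3 => rfl

lemma stepLS_count (w : List Bool) : (stepLS w).count true = w.count true := by
  induction w using stepLS.induct with
  | case1 rest ih => simp [stepLS, ih, List.count_cons]
  | case2 a rest h ih => rw [stepLS_eq_cons a rest h]; simp [ih, List.count_cons]
  | case3 => rfl

lemma stepLS_cnt (w : List Bool) :
    ∀ p, cnt (p+1) (stepLS w) = min (cnt (p+2) w) (cnt p w + 1) := by
  induction w using stepLS.induct with
  | case1 rest ih =>
    intro p
    show cnt (p+1) (true :: false :: stepLS rest) = _
    match p with
    | 0 => simp
    | 1 => simp
    | (q+2) =>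
      have := ih q
      simp only [cnt_succ_true, cnt_succ_false] at *
      omega
  | case2 a rest h ih =>
    intro p
    rw [stepLS_eq_cons a rest h]
    cases a with
    | true =>
      match p with
      | 0 => simp
      | (q+1) =>
        have := ih q
        simp only [cnt_succ_true] at *
        omega
    | false =>
      match p with
      | 0 =>
        simp only [cnt_succ_false, cnt_zero]
        match rest with
        | [] => simp
        | true :: r => exact absurd rfl (h r rfl)
        | false :: r => simp
      | (q+1) =>
        have := ih q
        simp only [cnt_succ_false] at *
        omega
  | case3 => intro p; show cnt (p+1) ([]:List Bool) = _; simp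

lemma SPrec_cnt {lam mu : List Bool} (h : SPrec lam mu) (p : ℕ) : cnt p mu ≤ cnt p lam := h p

lemma SPrec_trans {a b c : List Bool} (h1 : SPrec a b) (h2 : SPrec b c) : SPrec a c :=
  fun p => le_trans (h2 p) (h1 p)

lemma SPrec_stepLS {lam mu : List Bool} (h : SPrec lam mu) : SPrec (stepLS lam) (stepLS mu) := by
  intro p
  match p with
  | 0 => simp
  | (q+1) =>
    show cnt (q+1) (stepLS mu) ≤ cnt (q+1) (stepLS lam)
    rw [stepLS_cnt, stepLS_cnt]
    have h1 := h (q+2)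
    have h2 := h q
    show min (cnt (q+2) mu) (cnt q mu + 1) ≤ min (cnt (q+2) lam) (cnt q lam + 1)
    have h1' : cnt (q+2) mu ≤ cnt (q+2) lam := h1
    have h2' : cnt q mu ≤ cnt q lam := h2
    omega

lemma stepLS_append (u v : List Bool)
    (h : u.getLast? ≠ some false ∨ v.head? ≠ some true) :
    stepLS (u ++ v) = stepLS u ++ stepLS v := by
  induction u using stepLS.induct with
  | case1 rest ih =>
    have h' : rest.getLast? ≠ some false ∨ v.head? ≠ some true := by
      match rest with
      | [] => left; simp
      | x :: r =>
        rcases h with h | h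
        · left; simpa [List.getLast?_cons_cons] using h
        · right; exact h
    show stepLS (false :: true :: (rest ++ v)) = _
    simp [stepLS, ih h']
  | case2 a rest hpat ih =>
    have key : stepLS (a :: (rest ++ v)) = a :: stepLS (rest ++ v) := by
      apply stepLS_eq_cons
      intro r ha hr
      match rest with
      | [] =>
        subst ha
        rcases h with h | h
        · simp at h
        · simp at hr; rw [hr] at h; simp at h
      | b :: r' =>
        simp at hr
        exact hpat _ ha (by rw [hr.1])
    rw [List.cons_append, key, stepLS_eq_cons a rest hpat, List.cons_append]
    congr 1
    apply ih
    match rest with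
    | [] => left; simp
    | x :: r =>
      rcases h with h | h
      · left; simpa [List.getLast?_cons_cons] using h
      · right; exact h
  | case3 => rfl

lemma cnt_append (p : ℕ) (u z : List Bool) :
    cnt p (u ++ z) = cnt p u + cnt (p - u.length) z := by
  simp [cnt, List.take_append, List.count_append]

lemma SPrec_append {u u' z z' : List Bool} (h1 : SPrec u u') (h2 : SPrec z z')
    (hl : u.length = u'.length) : SPrec (u ++ z) (u' ++ z') := by
  intro p
  show cnt p (u' ++ z') ≤ cnt p (u ++ z)
  rw [cnt_append, cnt_append, ← hl]
  exact Nat.add_le_add (h1 p) (h2 _)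

lemma cnt_le_length (p : ℕ) (w : List Bool) : cnt p w ≤ p := by
  calc cnt p w ≤ (w.take p).length := List.count_le_length
  _ ≤ p := by simp [List.length_take]

lemma cnt_le_count (p : ℕ) (w : List Bool) : cnt p w ≤ w.count true :=
  (w.take_sublist p).count_le _

lemma SPrec_top {a b : ℕ} {u' : List Bool} (hc : u'.count true ≤ b) :
    SPrec (List.replicate b true ++ List.replicate a false) u' := by
  intro p
  show cnt p u' ≤ cnt p (List.replicate b true ++ List.replicate a false)
  have : cnt p (List.replicate b true ++ List.replicate a false) = min p b := by
    rw [cnt_append]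
    simp [cnt, List.take_replicate, List.count_replicate]
  rw [this]
  have := cnt_le_length p u'
  have := cnt_le_count p u'
  omega

lemma flatten_fallSplit (l : List Nat) : (fallSplit l).flatten = l := by
  induction l using fallSplit.induct with
  | case1 => rfl
  | case2 a rest b bs gs hfs hlt ih =>
    rw [fallSplit, hfs]
    simp only [if_pos hlt]
    rw [hfs] at ih
    simpa using ih
  | case3 a rest b bs gs hfs hlt ih =>
    rw [fallSplit, hfs]
    simp only [if_neg hlt]
    rw [hfs] at ih
    simpa using ih
  | case4 a rest hpat ih =>
    rw [fallSplit]
    match hfs : fallSplit rest with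
    | [] => rw [hfs] at ih; simp at ih; simp [ih]
    | [] :: gs => rw [hfs] at ih; simpa [ih] using ih
    | (b :: bs) :: gs => exact absurd hfs (by intro h; exact hpat _ _ _ h)

def DecBlock (B : List Nat) : Prop := B ≠ [] ∧ B.Chain' (fun x y => y < x)

def Bnd (B C : List Nat) : Prop := ∀ x ∈ B.getLast?, ∀ y ∈ C.head?, x ≤ y

def GB (L : List (List Nat)) : Prop := (∀ B ∈ L, DecBlock B) ∧ L.Chain' Bnd

lemma gb_fallSplit (l : List Nat) : GB (fallSplit l) := by
  induction l using fallSplit.induct with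
  | case1 =>
    show GB ([] : List (List Nat))
    exact ⟨fun B hB => absurd hB (by simp), List.isChain_nil⟩
  | case2 a rest b bs gs hfs hlt ih =>
    rw [fallSplit, hfs]
    simp only [if_pos hlt]
    rw [hfs] at ih
    obtain ⟨hmem, hch⟩ := ih
    constructor
    · intro B hB
      rcases List.mem_cons.mp hB with rfl | hB
      · have := hmem _ (List.mem_cons_self)
        exact ⟨by simp, List.isChain_cons_cons.mpr ⟨hlt, this.2⟩⟩
      · exact hmem _ (List.mem_cons_of_mem _ hB)
    · unfold List.Chain' at hch ⊢; rw [List.isChain_cons] at hch ⊢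
      refine ⟨?_, hch.2⟩
      intro C hC
      have := hch.1 C hC
      intro x hx y hy
      exact this x (by rwa [List.getLast?_cons_cons] at hx) y hy
  | case3 a rest b bs gs hfs hlt ih =>
    rw [fallSplit, hfs]
    simp only [if_neg hlt]
    rw [hfs] at ih
    obtain ⟨hmem, hch⟩ := ih
    constructor
    · intro B hB
      rcases List.mem_cons.mp hB with rfl | hB
      · exact ⟨by simp, List.isChain_singleton _⟩
      · exact hmem _ hB
    · unfold List.Chain'; rw [List.isChain_cons_cons]
      refine ⟨?_, hch⟩
      intro x hx y hy
      simp at hx hy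
      omega
  | case4 a rest hpat ih =>
    rw [fallSplit]
    match hfs : fallSplit rest with
    | [] =>
      exact ⟨by rintro B hB; simp at hB; exact ⟨by simp [hB], by subst hB; exact List.isChain_singleton _⟩, List.isChain_singleton _⟩
    | [] :: gs =>
      rw [hfs] at ih
      exact absurd rfl (ih.1 [] (List.mem_cons_self)).1
    | (b :: bs) :: gs => exact absurd hfs (fun h => hpat _ _ _ h)

lemma head?_of_fallSplit_cons {l : List Nat} {b : Nat} {bs : List Nat} {gs : List (List Nat)}
    (hfs : fallSplit l = (b :: bs) :: gs) : l.head? = some b := by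
  have := flatten_fallSplit l
  rw [hfs] at this
  rw [← this]
  simp

lemma fallSplit_single_head (a : Nat) (l : List Nat) (h : ∀ c ∈ l.head?, a ≤ c) :
    fallSplit (a :: l) = [a] :: fallSplit l := by
  rw [fallSplit]
  match hfs : fallSplit l with
  | [] => rfl
  | [] :: gs => exact absurd rfl ((gb_fallSplit l).1 [] (by rw [hfs]; exact List.mem_cons_self)).1
  | (b :: bs) :: gs =>
    have hb : a ≤ b := h b (by rw [head?_of_fallSplit_cons hfs]; rfl)
    simp only [if_neg (by omega : ¬ b < a)]

lemma fallSplit_pair (a b' : Nat) (l : List Nat) (hlt : b' < a)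
    (h : ∀ c ∈ l.head?, b' ≤ c) :
    fallSplit (a :: b' :: l) = [a, b'] :: fallSplit l := by
  rw [fallSplit, fallSplit_single_head b' l h]
  simp only [if_pos hlt]

lemma decblock_shadow (k : Nat) : ∀ (B : List Nat), B.Chain' (fun x y => y < x) →
    ∃ a b, shadow k B = List.replicate a false ++ List.replicate b true := by
  intro B
  induction B with
  | nil => exact fun _ => ⟨0, 0, rfl⟩
  | cons v t ih =>
    intro hch
    unfold List.Chain' at hch; rw [List.isChain_cons] at hch
    obtain ⟨hhd, hch'⟩ := hch
    obtain ⟨a, b, e⟩ := ih hch'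
    by_cases hv : v ≤ k
    · cases t with
      | nil => exact ⟨0, 1, by simp [shadow, hv]⟩
      | cons w t' =>
        have hw : w < v := hhd w rfl
        have hwk : w ≤ k := le_trans (le_of_lt hw) hv
        cases a with
        | succ a' =>
          exfalso
          have h1 : (shadow k (w::t')).head? = some false := by
            rw [e]; simp [List.replicate_succ]
          rw [shadow, List.map_cons] at h1
          simp [hwk] at h1
        | zero =>
          refine ⟨0, b+1, ?_⟩
          rw [List.replicate_zero, List.nil_append] at e ⊢
          rw [List.replicate_succ, shadow, List.map_cons, ← e]
          simp [hv, shadow]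
    · refine ⟨a+1, b, ?_⟩
      rw [List.replicate_succ, List.cons_append]
      rw [shadow, List.map_cons]
      rw [shadow] at e
      rw [e]
      simp [hv]

lemma keyA' (k : Nat) : ∀ L : List (List Nat), GB L →
    SPrec (shadow k ((L.map List.reverse).flatten)) (stepLS (shadow k L.flatten)) := by
  intro L
  induction L with
  | nil => intro _ p; simp [shadow, stepLS_nil]
  | cons B L' ih =>
    intro hGB
    obtain ⟨hmem, hch⟩ := hGB
    have hB := hmem B (List.mem_cons_self)
    obtain ⟨a, b, e⟩ := decblock_shadow k B hB.2
    have hGB' : GB L' := ⟨fun C hC => hmem C (List.mem_cons_of_mem _ hC), List.IsChain.tail hch⟩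
    have hlen : B.length = a + b := by
      have := congrArg List.length e; simpa [shadow] using this
    have hg1 : ((B :: L').map List.reverse).flatten = B.reverse ++ (L'.map List.reverse).flatten := by
      simp
    have hg2 : (B :: L').flatten = B ++ L'.flatten := rfl
    rw [hg1, hg2]
    have hsh1 : shadow k (B.reverse ++ (L'.map List.reverse).flatten)
        = (shadow k B).reverse ++ shadow k ((L'.map List.reverse).flatten) := by
      simp [shadow]
    have hsh2 : shadow k (B ++ L'.flatten) = shadow k B ++ shadow k L'.flatten := by
      simp [shadow]
    rw [hsh1, hsh2]
    have hsplit : stepLS (shadow k B ++ shadow k L'.flatten)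
        = stepLS (shadow k B) ++ stepLS (shadow k L'.flatten) := by
      apply stepLS_append
      cases b with
      | succ b' =>
        left
        rw [e, List.replicate_succ', ← List.append_assoc, List.getLast?_concat]
        simp
      | zero =>
        right
        cases L' with
        | nil => simp [shadow]
        | cons C L'' =>
          have hC := hmem C (List.mem_cons_of_mem _ (List.mem_cons_self))
          obtain ⟨c, ct, rfl⟩ := List.exists_cons_of_ne_nil hC.1
          have hbnd : Bnd B (c :: ct) := (List.isChain_cons_cons.mp hch).1
          obtain ⟨x, hx⟩ : ∃ x, B.getLast? = some x := by
            cases B with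
            | nil => exact absurd rfl hB.1
            | cons u ut => exact ⟨_, List.getLast?_eq_getLast (by simp)⟩
          have hxk : ¬ x ≤ k := by
            have h1 : (shadow k B).getLast? = some (decide (x ≤ k)) := by
              rw [shadow, List.getLast?_map, hx]; rfl
            rw [e] at h1
            have ha : 1 ≤ a := by
              rcases Nat.eq_zero_or_pos a with rfl | h
              · exfalso
                have : B.length = 0 := by omega
                exact hB.1 (List.eq_nil_of_length_eq_zero this)
              · exact h
            rw [List.replicate_zero, List.append_nil] at h1
            obtain ⟨a', rfl⟩ := Nat.exists_eq_add_of_le ha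
            rw [Nat.add_comm, List.replicate_succ', List.getLast?_concat] at h1
            simp at h1
            simpa using h1
          have hxc : x ≤ c := hbnd x hx c rfl
          have hck : ¬ c ≤ k := fun hc => hxk (le_trans hxc hc)
          have : (shadow k ((c :: ct) :: L'').flatten).head? = some false := by
            show (shadow k ((c :: ct) ++ L''.flatten)).head? = some false
            rw [shadow, List.map_append, List.map_cons]
            simp [hck]
          rw [this]
          simp
    rw [hsplit, e]
    rw [List.reverse_append, List.reverse_replicate, List.reverse_replicate]
    apply SPrec_append
    · apply SPrec_top
      rw [stepLS_count]
      simp [List.count_replicate]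
    · exact ih hGB'
    · rw [stepLS_length]
      simp
      omega

lemma keyA (k : Nat) (x : List Nat) : SPrec (shadow k (flipT x)) (stepLS (shadow k x)) := by
  have h := keyA' k (fallSplit x) (gb_fallSplit x)
  rw [flatten_fallSplit] at h
  exact h

def buildW (s b : ℕ) : List Bool → List ℕ
  | [] => []
  | true :: w => s :: buildW (s+1) b w
  | false :: w => b :: buildW s (b+1) w

lemma buildW_head? (s b : ℕ) (w : List Bool) :
    (buildW s b w).head? = w.head?.map (fun x => if x then s else b) := by
  match w with
  | [] => rfl
  | true :: w => rfl
  | false :: w => rfl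

lemma flipT_buildW (w : List Bool) : ∀ s b : ℕ, s + w.count true ≤ b →
    flipT (buildW s b w) = buildW s b (stepLS w) := by
  induction w using stepLS.induct with
  | case1 rest ih =>
    intro s b h
    have hcount : s + rest.count true + 1 ≤ b := by
      simp [List.count_cons] at h; omega
    show flipT (b :: s :: buildW (s+1) (b+1) rest) = buildW s b (true :: false :: stepLS rest)
    have hfs : fallSplit (b :: s :: buildW (s+1) (b+1) rest)
        = [b, s] :: fallSplit (buildW (s+1) (b+1) rest) := by
      apply fallSplit_pair
      · omega
      · intro c hc
        rw [buildW_head? (s+1) (b+1) rest] at hc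
        match hhd : rest.head? with
        | none => rw [hhd] at hc; simp at hc
        | some x =>
          rw [hhd] at hc
          simp at hc
          rcases x with _ | _ <;> simp at hc <;> omega
    rw [flipT, hfs]
    simp only [List.map_cons, List.flatten_cons]
    have := ih (s+1) (b+1) (by simp [List.count_cons] at h ⊢; omega)
    rw [flipT] at this
    rw [this]
    rfl
  | case2 a rest hpat ih =>
    intro s b h
    cases a with
    | true =>
      have hcount : s + 1 ≤ b := by simp [List.count_cons] at h; omega
      show flipT (s :: buildW (s+1) b rest) = buildW s b (stepLS (true :: rest))
      rw [stepLS_eq_cons _ _ hpat]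
      have hfs : fallSplit (s :: buildW (s+1) b rest) = [s] :: fallSplit (buildW (s+1) b rest) := by
        apply fallSplit_single_head
        intro c hc
        rw [buildW_head? (s+1) b rest] at hc
        match hhd : rest.head? with
        | none => rw [hhd] at hc; simp at hc
        | some x =>
          rw [hhd] at hc
          simp at hc
          rcases x with _ | _ <;> simp at hc <;> omega
      rw [flipT, hfs]
      simp only [List.map_cons, List.flatten_cons]
      have := ih (s+1) b (by simp [List.count_cons] at h ⊢; omega)
      rw [flipT] at this
      rw [this]
      rfl
    | false =>
      show flipT (b :: buildW s (b+1) rest) = buildW s b (stepLS (false :: rest))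
      rw [stepLS_eq_cons _ _ hpat]
      have hrest : ∀ c ∈ (buildW s (b+1) rest).head?, b ≤ c := by
        intro c hc
        rw [buildW_head? s (b+1) rest] at hc
        match hhd : rest.head? with
        | none => rw [hhd] at hc; simp at hc
        | some x =>
          rw [hhd] at hc
          simp at hc
          rcases x with _ | _
          · simp at hc; omega
          · exfalso
            match rest, hhd with
            | true :: r, _ => exact hpat r rfl rfl
      rw [flipT, fallSplit_single_head b _ hrest]
      simp only [List.map_cons, List.flatten_cons]
      have := ih s (b+1) (by simp [List.count_cons] at h ⊢; omega)
      rw [flipT] at this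
      rw [this]
      rfl
  | case3 => intro s b h; rfl

lemma shadow_buildW (k : ℕ) (w : List Bool) : ∀ s b : ℕ, s + w.count true ≤ k + 1 → k < b →
    shadow k (buildW s b w) = w := by
  induction w with
  | nil => intro s b _ _; rfl
  | cons x w ih =>
    intro s b h1 h2
    cases x with
    | true =>
      show shadow k (s :: buildW (s+1) b w) = true :: w
      rw [shadow, List.map_cons]
      have hs : s ≤ k := by simp [List.count_cons] at h1; omega
      have := ih (s+1) b (by simp [List.count_cons] at h1 ⊢; omega) h2
      rw [shadow] at this
      simp [hs, this]
    | false =>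
      show shadow k (b :: buildW s (b+1) w) = false :: w
      rw [shadow, List.map_cons]
      have hb : ¬ b ≤ k := by omega
      have := ih s (b+1) (by simp [List.count_cons] at h1 ⊢; omega) (by omega)
      rw [shadow] at this
      simp [hb, this]

lemma buildW_rep_true (t : ℕ) : ∀ s b : ℕ, buildW s b (List.replicate t true) = List.range' s t := by
  induction t with
  | zero => intro s b; rfl
  | succ t ih =>
    intro s b
    rw [List.replicate_succ, List.range'_succ]
    show s :: buildW (s+1) b (List.replicate t true) = _
    rw [ih]

lemma buildW_rep (t : ℕ) : ∀ f s b : ℕ,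
    buildW s b (List.replicate f false ++ List.replicate t true)
      = List.range' b f ++ List.range' s t := by
  intro f
  induction f with
  | zero =>
    intro s b
    rw [List.replicate_zero, List.nil_append, List.range'_zero, List.nil_append, buildW_rep_true]
  | succ f ih =>
    intro s b
    rw [List.replicate_succ, List.cons_append, List.range'_succ]
    show b :: buildW s (b+1) (List.replicate f false ++ List.replicate t true) = _
    rw [ih s (b+1), List.cons_append]

lemma stepLS_iter_count (m : ℕ) (w : List Bool) :
    (stepLS^[m] w).count true = w.count true := by
  induction m with
  | zero => rfl
  | succ m ih => rw [Function.iterate_succ_apply', stepLS_count, ih]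

lemma count_true_add_count_false (l : List Bool) : l.count true + l.count false = l.length := by
  induction l with
  | nil => rfl
  | cons x l ih => cases x <;> simp [List.count_cons] <;> omega

lemma map_range'_true (k : ℕ) (t : ℕ) : ∀ s, s + t ≤ k + 1 →
    (List.range' s t).map (fun v => decide (v ≤ k)) = List.replicate t true := by
  induction t with
  | zero => intro s _; rfl
  | succ t ih =>
    intro s h
    rw [List.range'_succ, List.map_cons, ih (s+1) (by omega), List.replicate_succ]
    simp [show s ≤ k by omega]

lemma map_range'_false (k : ℕ) (t : ℕ) : ∀ s, k < s →
    (List.range' s t).map (fun v => decide (v ≤ k)) = List.replicate t false := by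
  induction t with
  | zero => intro s _; rfl
  | succ t ih =>
    intro s h
    rw [List.range'_succ, List.map_cons, ih (s+1) (by omega), List.replicate_succ]
    simp [show ¬ s ≤ k by omega]

lemma shadow_range' (n k : ℕ) (hkn : k ≤ n) :
    shadow k (List.range' 1 n) = List.replicate k true ++ List.replicate (n - k) false := by
  have : List.range' 1 k ++ List.range' (k+1) (n-k) = List.range' 1 n := by
    have := List.range'_append (s := 1) (m := k) (n := n-k) (step := 1)
    simp only [Nat.one_mul] at this
    rw [Nat.add_comm 1 k] at this
    rw [this]
    congr 1
    omega
  rw [← this, shadow, List.map_append, map_range'_true k k 1 (by omega),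
    map_range'_false k (n-k) (k+1) (by omega)]

lemma base_case (n k : ℕ) (hkn : k ≤ n) (π : List ℕ) (hπ : π.Perm (List.range' 1 n)) :
    SPrec (shadow k π) (List.replicate (n - k) false ++ List.replicate k true) := by
  have hperm : (shadow k π).Perm (shadow k (List.range' 1 n)) := hπ.map _
  have hrng := shadow_range' n k hkn
  have htrue : (shadow k π).count true = k := by
    rw [hperm.count_eq, hrng]
    simp [List.count_replicate]
  have hfalse : (shadow k π).count false = n - k := by
    rw [hperm.count_eq, hrng]
    simp [List.count_replicate]
  have hlength : (shadow k π).length = n := by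
    rw [hperm.length_eq, hrng]
    simp
    omega
  intro p
  show cnt p _ ≤ cnt p _
  have h1 : cnt p (List.replicate (n - k) false ++ List.replicate k true)
      = min (p - (n - k)) k := by
    rw [cnt_append]
    simp [cnt, List.take_replicate, List.count_replicate]
  rw [h1]
  have h2 : cnt p (shadow k π) + ((shadow k π).take p).count false
      = min p ((shadow k π).length) := by
    rw [← List.length_take]
    exact count_true_add_count_false _
  have h3 : ((shadow k π).take p).count false ≤ n - k := by
    rw [← hfalse]
    exact ((shadow k π).take_sublist p).count_le _
  rw [hlength] at h2
  omega

/-- For ρ = ⊖(n−k, k) = (k+1)(k+2)…n 1 2…k and every permutation π of size n,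
shadow_k(T^m(π)) ≼ shadow_k(T^m(ρ)) for all m ≥ 0. -/
theorem shadow_majorated_by_rho (n k : ℕ) (hk1 : 1 ≤ k) (hk2 : k ≤ n - 1)
    (π : List ℕ) (hπ : IsPermList n π) (m : ℕ) :
    SPrec (shadow k (flipT^[m] π))
      (shadow k (flipT^[m] (List.range' (k + 1) (n - k) ++ List.range' 1 k))) := by
  have hπ' : π.Perm (List.range' 1 n) := hπ
  have hkn : k + 1 ≤ n := by omega
  set w0 : List Bool := List.replicate (n - k) false ++ List.replicate k true with hw0
  have hw0count : w0.count true = k := by simp [hw0, List.count_replicate]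
  have hrho : ∀ m', flipT^[m'] (List.range' (k + 1) (n - k) ++ List.range' 1 k)
      = buildW 1 (k+1) (stepLS^[m'] w0) := by
    intro m'
    induction m' with
    | zero =>
      show List.range' (k + 1) (n - k) ++ List.range' 1 k = buildW 1 (k+1) w0
      rw [hw0, buildW_rep]
    | succ m' ih =>
      rw [Function.iterate_succ_apply', ih, Function.iterate_succ_apply']
      apply flipT_buildW
      rw [stepLS_iter_count, hw0count]; omega
  have hshrho : shadow k (flipT^[m] (List.range' (k + 1) (n - k) ++ List.range' 1 k))
      = stepLS^[m] w0 := by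
    rw [hrho m]
    apply shadow_buildW
    · rw [stepLS_iter_count, hw0count]; omega
    · omega
  rw [hshrho]
  clear hshrho
  induction m with
  | zero => exact base_case n k (by omega) π hπ'
  | succ m ih =>
    rw [Function.iterate_succ_apply', Function.iterate_succ_apply']
    exact SPrec_trans (keyA k _) (SPrec_stepLS ih)
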